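/- arXiv:1604.05268 — 2 statements merged into one kernel-verified Lean document; each statement's English description precedes it below -/
import Mathlib

section
/- Fix t > 0, α ∈ (0, 1/(2π²)), and q ∈ (0,1). Then for all sufficiently small Δx > 0, for all ξ with |ξΔx| ≤ Δx^q and all η with ηΔx ∈ [−π + ξΔx, π + ξΔx], the inequality α(ηΔx)² ≤ 1 − sinc(ξΔx)·cos(ηΔx) holds. -/
open Real

/-- The unnormalized sinc function. -/
noncomputable def sinc (x : ℝ) : ℝ := if x = 0 then 1 else Real.sin x / x

lemma sinc_le_one (x : ℝ) : _root_.sinc x ≤ 1 := by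
  unfold _root_.sinc
  split
  · exact le_refl 1
  · rename_i hx
    rcases lt_or_gt_of_ne hx with h | h
    · rw [← neg_div_neg_eq, div_le_one (by linarith)]
      have := Real.sin_le (x := -x) (by linarith)
      rw [Real.sin_neg] at this
      linarith
    · rw [div_le_one h]
      exact Real.sin_le h.le

lemma sinc_nonneg {x : ℝ} (h : |x| ≤ π) : 0 ≤ _root_.sinc x := by
  unfold _root_.sinc
  split
  · norm_num
  · rename_i hx
    rcases lt_or_gt_of_ne hx with h' | h'
    · rw [← neg_div_neg_eq]
      have habs : -x ≤ π := by
        have := le_abs_self (-x); rw [abs_neg] at this; exact this.trans h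
      have := Real.sin_nonneg_of_nonneg_of_le_pi (x := -x) (by linarith) habs
      rw [Real.sin_neg] at this
      exact div_nonneg (by linarith) (by linarith)
    · have habs : x ≤ π := (le_abs_self x).trans h
      exact div_nonneg (Real.sin_nonneg_of_nonneg_of_le_pi h'.le habs) h'.le

/-- Region Ω₂ estimate: for `α ∈ (0, 1/(2π²))`, `q ∈ (0,1)` and all sufficiently
small `Δx > 0`, if `|ξΔx| ≤ Δx^q` and `ηΔx ∈ [−π+ξΔx, π+ξΔx]` then
`α(ηΔx)² ≤ 1 − sinc(ξΔx)cos(ηΔx)`. -/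
theorem low_xi_high_eta_estimate (t : ℝ) (ht : 0 < t)
    (α : ℝ) (hα : 0 < α) (hα' : α < 1 / (2 * π ^ 2))
    (q : ℝ) (hq : 0 < q) (hq' : q < 1) :
    ∃ δ > 0, ∀ Δx : ℝ, 0 < Δx → Δx < δ → ∀ ξ η : ℝ,
      |ξ * Δx| ≤ Δx ^ q →
      -π + ξ * Δx ≤ η * Δx → η * Δx ≤ π + ξ * Δx →
      α * (η * Δx) ^ 2 ≤ 1 - _root_.sinc (ξ * Δx) * Real.cos (η * Δx) := by
  refine ⟨1, one_pos, fun Δx hΔ hΔ1 ξ η hξ hlo hhi => ?_⟩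
  set s := ξ * Δx with hs
  set y := η * Δx with hy
  have hpi3 := Real.pi_gt_three
  have hpi0 := Real.pi_pos
  have hs1 : |s| ≤ 1 := hξ.trans (Real.rpow_lt_one hΔ.le hΔ1 hq).le
  have hsabs := abs_le.1 hs1
  have hsπ : |s| ≤ π := hs1.trans (by linarith)
  have hyabs : |y| ≤ π + 1 := abs_le.2 ⟨by linarith, by linarith⟩
  have hy2 : y ^ 2 ≤ (π + 1) ^ 2 := by
    have := abs_le.1 hyabs
    nlinarith
  rcases le_or_gt 0 (Real.cos y) with hc | hc
  · -- cos y ≥ 0, hence |y| ≤ π and Jordan's inequality applies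
    have hyπ : |y| ≤ π := by
      by_contra hcon
      push_neg at hcon
      have habs := abs_le.1 hyabs
      have hneg : Real.cos |y| < 0 :=
        Real.cos_neg_of_pi_div_two_lt_of_lt (by linarith) (by linarith)
      rw [Real.cos_abs] at hneg
      linarith
    have hJ := Real.cos_le_one_sub_mul_cos_sq hyπ
    have hmul : _root_.sinc s * Real.cos y ≤ Real.cos y :=
      mul_le_of_le_one_left hc (_root_.sinc_le_one s)
    have hα2 : α * y ^ 2 ≤ 1 / (2 * π ^ 2) * y ^ 2 :=
      mul_le_mul_of_nonneg_right hα'.le (sq_nonneg y)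
    have hππ : 0 < π ^ 2 := by positivity
    rw [div_mul_eq_mul_div, le_div_iff₀ (by positivity)] at hα2
    have hJ' : 2 / π ^ 2 * y ^ 2 ≤ 1 - Real.cos y := by linarith
    have hJ'' : 2 * y ^ 2 ≤ (1 - Real.cos y) * π ^ 2 := by
      rw [div_mul_eq_mul_div, div_le_iff₀ hππ] at hJ'
      linarith
    nlinarith [mul_nonneg hα.le (sq_nonneg y), hππ]
  · -- cos y < 0, so sinc s * cos y ≤ 0 and it suffices that α y² ≤ 1
    have h0 : 0 ≤ _root_.sinc s := _root_.sinc_nonneg hsπ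
    have hmul : _root_.sinc s * Real.cos y ≤ 0 := mul_nonpos_of_nonneg_of_nonpos h0 hc.le
    have hα2 : α * y ^ 2 ≤ 1 / (2 * π ^ 2) * (π + 1) ^ 2 := by
      have h1 : α * y ^ 2 ≤ α * (π + 1) ^ 2 := by nlinarith
      have h2 : α * (π + 1) ^ 2 ≤ 1 / (2 * π ^ 2) * (π + 1) ^ 2 :=
        mul_le_mul_of_nonneg_right hα'.le (by positivity)
      linarith
    have : 1 / (2 * π ^ 2) * (π + 1) ^ 2 ≤ 1 := by
      rw [div_mul_eq_mul_div, div_le_one (by positivity)]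
      nlinarith
    linarith
end

section
/- Fix t > 0 and q ∈ (0,1). There exists α < 0.3 such that for all sufficiently small Δx > 0 and all ξ with |ξΔx| ≥ Δx^q, one has 1 − sinc(ξΔx)·cos(ηΔx) ≥ (1/100)·min(Δx^{2q}, 100(1−α)) for all η ∈ ℝ; consequently exp(−(2t/Δx²)(1 − sinc(ξΔx)cos(ηΔx))) ≤ exp(−(t/50)·Δx^{−2(1−q)}) for Δx small enough. -/
open Real

lemma sinc_neg' (x : ℝ) : _root_.sinc (-x) = _root_.sinc x := by
  unfold _root_.sinc
  rcases eq_or_ne x 0 with h | h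
  · simp [h]
  · rw [if_neg (neg_ne_zero.mpr h), if_neg h, Real.sin_neg, neg_div_neg_eq]

lemma sinc_abs' (x : ℝ) : _root_.sinc |x| = _root_.sinc x := by
  rcases abs_choice x with h | h
  · rw [h]
  · rw [h, sinc_neg']

lemma abs_sinc_le_of_pos {X s : ℝ} (hs : 0 < s) (hs1 : s ≤ 1) (hX : s ≤ X) :
    |_root_.sinc X| ≤ 1 - s ^ 2 / 100 := by
  have hX0 : 0 < X := lt_of_lt_of_le hs hX
  have hsinc : _root_.sinc X = Real.sin X / X := by unfold _root_.sinc; rw [if_neg hX0.ne']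
  have hpi : (3 : ℝ) < π := Real.pi_gt_three
  rcases le_or_gt X 1 with h1 | h1
  · -- X ≤ 1
    have hb := Real.sin_bound (x := X) (by rwa [abs_of_pos hX0])
    rw [abs_of_pos hX0] at hb
    have hub : Real.sin X ≤ X - X ^ 3 / 6 + X ^ 4 * (5 / 96) := by
      have := abs_sub_le_iff.mp hb
      nlinarith [this.1, mul_le_mul_of_nonneg_left h1 (pow_nonneg hX0.le 4)]
    have hsinn : 0 ≤ Real.sin X := Real.sin_nonneg_of_nonneg_of_le_pi hX0.le (by linarith)
    have hss' : s ^ 2 ≤ X ^ 2 := by nlinarith [mul_le_mul hX hX hs.le hX0.le]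
    have hss : s ^ 2 * X ≤ X ^ 3 := by
      nlinarith [mul_le_mul_of_nonneg_right hss' hX0.le]
    have h14 : X ^ 4 ≤ X ^ 3 := by
      nlinarith [mul_le_mul_of_nonneg_left h1 (pow_nonneg hX0.le 3)]
    rw [hsinc, abs_of_nonneg (div_nonneg hsinn hX0.le), div_le_iff₀ hX0]
    nlinarith
  · rcases le_or_gt X π with h2 | h2
    · -- 1 < X ≤ π
      have hsinn : 0 ≤ Real.sin X := Real.sin_nonneg_of_nonneg_of_le_pi hX0.le h2
      have hs2 : Real.sin X = 2 * Real.sin (X / 2) * Real.cos (X / 2) := by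
        rw [← Real.sin_two_mul]; ring_nf
      have hcosnn : 0 ≤ Real.cos (X / 2) :=
        Real.cos_nonneg_of_mem_Icc ⟨by linarith, by linarith⟩
      have hsinle : Real.sin (X / 2) ≤ X / 2 := Real.sin_le (by linarith)
      have h3 : Real.sin X ≤ X * Real.cos (X / 2) := by
        rw [hs2]; nlinarith
      have h4 : Real.cos (X / 2) ≤ Real.cos (1 / 2) :=
        Real.cos_le_cos_of_nonneg_of_le_pi (by norm_num) (by linarith) (by linarith)
      have h5 : Real.cos (1 / 2) ≤ 0.88 := by
        have habs : |(1:ℝ)/2| = 1/2 := abs_of_pos (by norm_num)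
        have hb := Real.cos_bound (x := 1/2) (by rw [habs]; norm_num)
        rw [habs] at hb
        have hb2 := abs_sub_le_iff.mp hb
        norm_num at hb2 ⊢
        linarith [hb2.1]
      have hp1 : X * Real.cos (X / 2) ≤ X * 0.88 :=
        mul_le_mul_of_nonneg_left (h4.trans h5) hX0.le
      have hp2 : X * s ^ 2 ≤ X * 1 :=
        mul_le_mul_of_nonneg_left (by nlinarith) hX0.le
      rw [hsinc, abs_of_nonneg (div_nonneg hsinn hX0.le), div_le_iff₀ hX0]
      nlinarith
    · -- X > π
      rw [hsinc, abs_div, abs_of_pos hX0]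
      have h3 : |Real.sin X| / X ≤ 1 / X := by
        gcongr
        exact Real.abs_sin_le_one X
      have h4 : (1:ℝ) / X ≤ 1 / 3 := by
        apply one_div_le_one_div_of_le <;> linarith
      nlinarith

/-- Region Ω₃ (high ξ-wavenumber) estimate: there is `α < 0.3` such that for all
sufficiently small `Δx > 0` and all `ξ` with `|ξΔx| ≥ Δx^q`, for every `η`,
`1 − sinc(ξΔx)cos(ηΔx) ≥ (1/100)·min(Δx^{2q}, 100(1−α))` and consequently
`exp(−(2t/Δx²)(1 − sinc(ξΔx)cos(ηΔx))) ≤ exp(−(t/50)Δx^{−2(1−q)})`. -/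
theorem high_xi_estimate (t q : ℝ) (ht : 0 < t) (hq : 0 < q) (hq' : q < 1) :
    ∃ α : ℝ, α < 0.3 ∧ ∃ δ > 0, ∀ Δx : ℝ, 0 < Δx → Δx < δ →
      ∀ ξ : ℝ, Δx ^ q ≤ |ξ * Δx| → ∀ η : ℝ,
        (1 / 100) * min (Δx ^ (2 * q)) (100 * (1 - α))
            ≤ 1 - _root_.sinc (ξ * Δx) * Real.cos (η * Δx) ∧
        Real.exp (-(2 * t / Δx ^ 2) * (1 - _root_.sinc (ξ * Δx) * Real.cos (η * Δx)))
            ≤ Real.exp (-(t / 50) * Δx ^ (-(2 * (1 - q)))) := by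
  refine ⟨0, by norm_num, 1, one_pos, fun Δx hΔx hΔx1 ξ hξ η => ?_⟩
  have hs : 0 < Δx ^ q := Real.rpow_pos_of_pos hΔx q
  have hs1 : Δx ^ q ≤ 1 := (Real.rpow_lt_one hΔx.le hΔx1 hq).le
  have key : |_root_.sinc (ξ * Δx)| ≤ 1 - (Δx ^ q) ^ 2 / 100 := by
    rw [← sinc_abs' (ξ * Δx)]
    exact abs_sinc_le_of_pos hs hs1 hξ
  have habs : _root_.sinc (ξ * Δx) * Real.cos (η * Δx) ≤ |_root_.sinc (ξ * Δx)| := by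
    calc _root_.sinc (ξ * Δx) * Real.cos (η * Δx)
        ≤ |_root_.sinc (ξ * Δx) * Real.cos (η * Δx)| := le_abs_self _
      _ = |_root_.sinc (ξ * Δx)| * |Real.cos (η * Δx)| := abs_mul _ _
      _ ≤ |_root_.sinc (ξ * Δx)| * 1 :=
          mul_le_mul_of_nonneg_left (Real.abs_cos_le_one _) (abs_nonneg _)
      _ = |_root_.sinc (ξ * Δx)| := mul_one _
  have h2q : Δx ^ (2 * q) = (Δx ^ q) ^ 2 := by
    rw [mul_comm, Real.rpow_mul hΔx.le, show ((2:ℝ)) = ((2:ℕ):ℝ) by norm_num,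
      Real.rpow_natCast]
  have hmin : min (Δx ^ (2 * q)) (100 * (1 - (0:ℝ))) = (Δx ^ q) ^ 2 := by
    rw [h2q, min_eq_left (by nlinarith)]
  have hA : (Δx ^ q) ^ 2 / 100 ≤ 1 - _root_.sinc (ξ * Δx) * Real.cos (η * Δx) := by
    linarith
  constructor
  · rw [hmin]; linarith
  · rw [Real.exp_le_exp]
    have hpow : Δx ^ (-(2 * (1 - q))) = (Δx ^ q) ^ 2 / Δx ^ 2 := by
      rw [show -(2 * (1 - q)) = 2 * q + (-2) by ring, Real.rpow_add hΔx, h2q,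
        Real.rpow_neg hΔx.le, show ((2:ℝ)) = ((2:ℕ):ℝ) by norm_num,
        Real.rpow_natCast, div_eq_mul_inv]
    rw [hpow]
    have h2t : (0:ℝ) ≤ 2 * t / Δx ^ 2 := by positivity
    have hmul := mul_le_mul_of_nonneg_left hA h2t
    have e1 : (2 * t / Δx ^ 2) * ((Δx ^ q) ^ 2 / 100)
        = (t / 50) * ((Δx ^ q) ^ 2 / Δx ^ 2) := by
      field_simp; ring
    nlinarith
end
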